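/- Let G be a connected graph on n ≥ 2 vertices with principal eigenvector x normalized so that ∑_{i=1}^n x_i² = 1. The largest entry of x equals 1/√2 if and only if G is the star K_{1,n-1} on n vertices. -/

import Mathlib

open Matrix Finset


lemma star_sup {n : ℕ} (hn : 2 ≤ n) (G : SimpleGraph (Fin n)) [DecidableRel G.Adj]
    (x : Fin n → ℝ) (ρ : ℝ) (hx_pos : ∀ i, 0 < x i) (hx_norm : ∑ i, x i ^ 2 = 1)
    (heig : G.adjMatrix ℝ *ᵥ x = ρ • x) (c : Fin n)
    (hchar : ∀ a b, G.Adj a b ↔ (a = c ∧ b ≠ c) ∨ (b = c ∧ a ≠ c)) :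
    (⨆ i, x i) = 1 / Real.sqrt 2 := by
  have heq : ∀ i, ∑ u ∈ G.neighborFinset i, x u = ρ * x i := by
    intro i
    have := congrFun heig i
    simpa using this
  have hNc : G.neighborFinset c = Finset.univ.erase c := by
    ext w
    simp [SimpleGraph.mem_neighborFinset, hchar, eq_comm]
  have hNu : ∀ u, u ≠ c → G.neighborFinset u = {c} := by
    intro u hu
    ext w
    simp only [SimpleGraph.mem_neighborFinset, hchar, Finset.mem_singleton]
    constructor
    · rintro (⟨h1, h2⟩ | ⟨h1, h2⟩)
      · exact absurd h1 hu
      · exact h1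
    · rintro rfl
      exact Or.inr ⟨rfl, hu⟩
  haveI : Nonempty (Fin n) := ⟨⟨0, by omega⟩⟩
  obtain ⟨u0, hu0⟩ : ∃ u : Fin n, u ≠ c := by
    haveI : Nontrivial (Fin n) := ⟨⟨⟨0, by omega⟩, ⟨1, by omega⟩, by simp [Fin.ext_iff]⟩⟩
    exact exists_ne c
  have hleafval : ∀ u, u ≠ c → ρ * x u = x c := by
    intro u hu
    have := heq u
    rw [hNu u hu] at this
    simpa using this.symm
  have hρ : 0 < ρ := by
    have := hleafval u0 hu0
    nlinarith [hx_pos u0, hx_pos c]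
  have hval : ∀ u ∈ Finset.univ.erase c, x u = x c / ρ := by
    intro u hu
    have h := hleafval u (Finset.ne_of_mem_erase hu)
    field_simp
    linarith [h]
  have hcard : (Finset.univ.erase c).card = n - 1 := by
    rw [Finset.card_erase_of_mem (Finset.mem_univ c)]
    simp
  have hsum_c : ρ * x c = (n - 1 : ℕ) * (x c / ρ) := by
    rw [← heq c, hNc, Finset.sum_congr rfl hval, Finset.sum_const, hcard, nsmul_eq_mul]
  have hcast : ((n - 1 : ℕ) : ℝ) = (n : ℝ) - 1 := by
    have : 1 ≤ n := by omega
    push_cast [Nat.cast_sub this]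
    ring
  have hn1 : (1 : ℝ) ≤ (n - 1 : ℕ) := by
    rw [hcast]
    have : (2:ℝ) ≤ n := by exact_mod_cast hn
    linarith
  have hρsq : ρ ^ 2 = (n - 1 : ℕ) := by
    have hxc := hx_pos c
    field_simp at hsum_c
    rw [hcast]
    nlinarith [hsum_c, hxc]
  have hρ1 : 1 ≤ ρ := by nlinarith
  -- norm computation
  have hxc2 : x c ^ 2 = 1 / 2 := by
    have hsplit : x c ^ 2 + ∑ u ∈ Finset.univ.erase c, x u ^ 2 = 1 := by
      rw [← hx_norm]
      exact Finset.add_sum_erase _ (fun u => x u ^ 2) (Finset.mem_univ c)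
    have hsq : ∀ u ∈ Finset.univ.erase c, x u ^ 2 = (x c / ρ) ^ 2 := by
      intro u hu; rw [hval u hu]
    rw [Finset.sum_congr rfl hsq, Finset.sum_const, hcard, nsmul_eq_mul, div_pow, hρsq,
      ← mul_div_assoc, mul_div_cancel_left₀ _ (by positivity : ((n - 1 : ℕ) : ℝ) ≠ 0)] at hsplit
    linarith
  have hxc : x c = 1 / Real.sqrt 2 := by
    rw [← Real.sqrt_sq (hx_pos c).le, hxc2, one_div, one_div, ← Real.sqrt_inv]
  have hle : ∀ i, x i ≤ x c := by
    intro i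
    by_cases hi : i = c
    · subst hi; exact le_refl _
    · have := hval i (Finset.mem_erase.mpr ⟨hi, Finset.mem_univ i⟩)
      rw [this]
      rw [div_le_iff₀ hρ]
      nlinarith [hx_pos c]
  rw [← hxc]
  exact le_antisymm (ciSup_le hle) (le_ciSup (Set.Finite.bddAbove (Set.finite_range x)) c)


lemma forward_char {n : ℕ} (hn : 2 ≤ n) (G : SimpleGraph (Fin n)) [DecidableRel G.Adj]
    (hG : G.Connected) (x : Fin n → ℝ) (ρ : ℝ)
    (hx_pos : ∀ i, 0 < x i) (hx_norm : ∑ i, x i ^ 2 = 1)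
    (heig : G.adjMatrix ℝ *ᵥ x = ρ • x)
    (hsup : (⨆ i, x i) = 1 / Real.sqrt 2) :
    ∃ c, ∀ a b, G.Adj a b ↔ (a = c ∧ b ≠ c) ∨ (b = c ∧ a ≠ c) := by
  haveI : Nonempty (Fin n) := ⟨⟨0, by omega⟩⟩
  have heq : ∀ i, ∑ u ∈ G.neighborFinset i, x u = ρ * x i := by
    intro i
    have := congrFun heig i
    simpa using this
  -- argmax
  obtain ⟨v, hv⟩ : ∃ v, ∀ i, x i ≤ x v := Finite.exists_max x
  have hxv : x v = 1 / Real.sqrt 2 := by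
    rw [← hsup]
    exact le_antisymm (le_ciSup (Set.Finite.bddAbove (Set.finite_range x)) v) (ciSup_le hv)
  have hxv2 : x v ^ 2 = 1 / 2 := by
    rw [hxv, div_pow, one_pow, Real.sq_sqrt (by norm_num : (2:ℝ) ≥ 0)]
  have hxvpos : (0:ℝ) < x v := hx_pos v
  -- every vertex has a neighbor
  have hdeg : ∀ w : Fin n, (G.neighborFinset w).Nonempty := by
    intro w
    haveI : Nontrivial (Fin n) := ⟨⟨⟨0, by omega⟩, ⟨1, by omega⟩, by simp [Fin.ext_iff]⟩⟩
    obtain ⟨u, hu⟩ := exists_ne w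
    obtain ⟨p⟩ := hG.preconnected w u
    cases p with
    | nil => exact absurd rfl hu.symm
    | cons h q => exact ⟨_, (SimpleGraph.mem_neighborFinset _ _ _).mpr h⟩
  set N := G.neighborFinset v with hN
  set d := N.card with hd
  set S := ∑ u ∈ N, x u ^ 2 with hS
  have h1 : ∑ u ∈ N, x u = ρ * x v := heq v
  have hdpos : 0 < d := Finset.card_pos.mpr (hdeg v)
  have hρ : 0 < ρ := by
    have hpos : 0 < ∑ u ∈ N, x u :=
      Finset.sum_pos (fun u _ => hx_pos u) (hdeg v)
    nlinarith [hpos, h1, hxvpos]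
  -- Cauchy-Schwarz
  have hCS : (ρ * x v) ^ 2 ≤ d * S := by
    rw [← h1]
    exact_mod_cast sq_sum_le_card_mul_sum_sq (s := N) (f := x)
  -- subset
  have hsub : N ⊆ Finset.univ.erase v := by
    intro u hu
    exact Finset.mem_erase.mpr ⟨((SimpleGraph.mem_neighborFinset _ _ _).mp hu).ne', Finset.mem_univ u⟩
  have herase : ∑ u ∈ Finset.univ.erase v, x u ^ 2 = 1 - x v ^ 2 := by
    have h := Finset.add_sum_erase Finset.univ (fun u => x u ^ 2) (Finset.mem_univ v)
    rw [hx_norm] at h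
    linarith
  have hB : S ≤ 1 - x v ^ 2 := by
    rw [← herase]
    exact Finset.sum_le_sum_of_subset_of_nonneg hsub (fun i _ _ => sq_nonneg _)
  -- d ≤ ρ²
  have hstep : ∀ u ∈ N, x v ≤ ∑ w ∈ G.neighborFinset u, x w := by
    intro u hu
    exact Finset.single_le_sum (fun w _ => (hx_pos w).le)
      ((SimpleGraph.mem_neighborFinset _ _ _).mpr ((SimpleGraph.mem_neighborFinset _ _ _).mp hu).symm)
  have hdouble : ∑ u ∈ N, ∑ w ∈ G.neighborFinset u, x w = ρ ^ 2 * x v := by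
    calc ∑ u ∈ N, ∑ w ∈ G.neighborFinset u, x w = ∑ u ∈ N, ρ * x u :=
          Finset.sum_congr rfl fun u _ => heq u
      _ = ρ * (ρ * x v) := by rw [← Finset.mul_sum, h1]
      _ = ρ ^ 2 * x v := by ring
  have hC : (d : ℝ) ≤ ρ ^ 2 := by
    have h2 : (d : ℝ) * x v ≤ ρ ^ 2 * x v := by
      rw [← hdouble]
      calc (d : ℝ) * x v = ∑ _u ∈ N, x v := by rw [Finset.sum_const, nsmul_eq_mul]
        _ ≤ ∑ u ∈ N, ∑ w ∈ G.neighborFinset u, x w := Finset.sum_le_sum hstep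
    exact le_of_mul_le_mul_right h2 hxvpos
  -- equalities
  have hACS : ρ ^ 2 * (1 / 2) ≤ (d : ℝ) * S := by
    calc ρ ^ 2 * (1 / 2) = (ρ * x v) ^ 2 := by rw [mul_pow, hxv2]
      _ ≤ (d : ℝ) * S := hCS
  have hB' : S ≤ 1 / 2 := by rw [hxv2] at hB; linarith
  have hdR : (0:ℝ) < d := by exact_mod_cast hdpos
  have hdS : (d : ℝ) * S = (d : ℝ) * (1 / 2) :=
    le_antisymm (mul_le_mul_of_nonneg_left hB' hdR.le) (by nlinarith [hACS, hC])
  have hSeq : S = 1 / 2 := mul_left_cancel₀ hdR.ne' hdS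
  have hρsq : ρ ^ 2 = d := by nlinarith [hACS, hdS, hC]
  -- N = univ.erase v
  have hNeq : N = Finset.univ.erase v := by
    by_contra hne
    obtain ⟨w, hw_mem, hw_not⟩ := Finset.exists_of_ssubset (lt_of_le_of_ne hsub hne)
    have : S < ∑ u ∈ Finset.univ.erase v, x u ^ 2 :=
      Finset.sum_lt_sum_of_subset hsub hw_mem hw_not (pow_pos (hx_pos _) 2)
        (fun i _ _ => sq_nonneg _)
    rw [herase] at this
    linarith [hSeq, hxv2]
  -- all neighbors of neighbors are v
  have hleaf : ∀ u ∈ N, ∀ w, G.Adj u w → w = v := by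
    have hzero : ∑ u ∈ N, (∑ w ∈ G.neighborFinset u, x w - x v) = 0 := by
      rw [Finset.sum_sub_distrib, hdouble, Finset.sum_const, nsmul_eq_mul, hρsq]
      ring
    have hall := (Finset.sum_eq_zero_iff_of_nonneg
      (fun u hu => sub_nonneg.mpr (hstep u hu))).mp hzero
    intro u hu w hw
    by_contra hwv
    have huv : v ∈ G.neighborFinset u :=
      (SimpleGraph.mem_neighborFinset _ _ _).mpr ((SimpleGraph.mem_neighborFinset _ _ _).mp hu).symm
    have h3 := hall u hu
    have h4 : ∑ w ∈ G.neighborFinset u, x w = x v := by linarith [h3]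
    have h5 := Finset.add_sum_erase _ x huv
    have h6 : w ∈ (G.neighborFinset u).erase v :=
      Finset.mem_erase.mpr ⟨hwv, (SimpleGraph.mem_neighborFinset _ _ _).mpr hw⟩
    have h7 : 0 < ∑ w ∈ (G.neighborFinset u).erase v, x w :=
      Finset.sum_pos' (fun i _ => (hx_pos i).le) ⟨w, h6, hx_pos w⟩
    linarith [h4, h5, h7]
  refine ⟨v, fun a b => ?_⟩
  constructor
  · intro hab
    by_cases ha : a = v
    · subst ha
      exact Or.inl ⟨rfl, hab.ne'⟩
    · have haN : a ∈ N := by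
        rw [hNeq]
        exact Finset.mem_erase.mpr ⟨ha, Finset.mem_univ a⟩
      exact Or.inr ⟨hleaf a haN b hab, ha⟩
  · rintro (⟨rfl, hb⟩ | ⟨rfl, ha⟩)
    · have : b ∈ N := by
        rw [hNeq]; exact Finset.mem_erase.mpr ⟨hb, Finset.mem_univ b⟩
      exact (SimpleGraph.mem_neighborFinset _ _ _).mp this
    · have : a ∈ N := by
        rw [hNeq]; exact Finset.mem_erase.mpr ⟨ha, Finset.mem_univ a⟩
      exact ((SimpleGraph.mem_neighborFinset _ _ _).mp this).symm


lemma iso_of_char {n : ℕ} (hn : 2 ≤ n) (G : SimpleGraph (Fin n)) (c : Fin n)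
    (hchar : ∀ a b, G.Adj a b ↔ (a = c ∧ b ≠ c) ∨ (b = c ∧ a ≠ c)) :
    Nonempty (G ≃g completeBipartiteGraph (Fin 1) (Fin (n - 1))) := by
  have e1 : {i : Fin n // i = c} ≃ Fin 1 :=
    Fintype.equivFinOfCardEq (Fintype.card_subtype_eq c)
  have e2 : {i : Fin n // ¬ i = c} ≃ Fin (n - 1) :=
    Fintype.equivFinOfCardEq (by
      rw [Fintype.card_subtype_compl, Fintype.card_subtype_eq, Fintype.card_fin])
  let f : Fin n ≃ (Fin 1 ⊕ Fin (n - 1)) :=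
    (Equiv.sumCompl (· = c)).symm.trans (Equiv.sumCongr e1 e2)
  have hleft : ∀ a : Fin n, (f a).isLeft = (decide (a = c)) := by
    intro a
    by_cases h : a = c
    · simp [f, Equiv.sumCompl_symm_apply_of_pos h, h]
    · simp [f, Equiv.sumCompl_symm_apply_of_neg h, h]
  refine ⟨⟨f, ?_⟩⟩
  intro a b
  show (completeBipartiteGraph _ _).Adj (f a) (f b) ↔ G.Adj a b
  rw [hchar]
  have hra : ∀ z : Fin 1 ⊕ Fin (n-1), z.isRight = !z.isLeft := by
    rintro (z | z) <;> rfl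
  constructor
  · rintro (⟨h1, h2⟩ | ⟨h1, h2⟩)
    · rw [hleft] at h1
      rw [hra, hleft] at h2
      simp at h1 h2
      exact Or.inl ⟨h1, h2⟩
    · rw [hra, hleft] at h1
      rw [hleft] at h2
      simp at h1 h2
      exact Or.inr ⟨h2, h1⟩
  · rintro (⟨ha, hb⟩ | ⟨hb, ha⟩)
    · refine Or.inl ⟨?_, ?_⟩
      · rw [hleft]; simpa using ha
      · rw [hra, hleft]; simpa using hb
    · refine Or.inr ⟨?_, ?_⟩
      · rw [hra, hleft]; simpa using ha
      · rw [hleft]; simpa using hb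

lemma char_of_iso {n : ℕ} (G : SimpleGraph (Fin n))
    (e : G ≃g completeBipartiteGraph (Fin 1) (Fin (n - 1))) :
    ∀ a b, G.Adj a b ↔
      (a = e.symm (Sum.inl 0) ∧ b ≠ e.symm (Sum.inl 0)) ∨
      (b = e.symm (Sum.inl 0) ∧ a ≠ e.symm (Sum.inl 0)) := by
  intro a b
  set c := e.symm (Sum.inl 0) with hc
  have key : ∀ a : Fin n, (↑(e a) : Fin 1 ⊕ Fin (n-1)).isLeft = decide (a = c) := by
    intro a
    rcases h : (e a : Fin 1 ⊕ Fin (n-1)) with z | z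
    · have hz : z = 0 := Subsingleton.elim _ _
      subst hz
      have : a = c := by
        rw [hc]
        apply_fun e.symm at h
        simpa using h.symm ▸ (by simp : e.symm (e a) = a).symm
      simp [this, Sum.isLeft]
    · have : a ≠ c := by
        intro hac
        rw [hac, hc] at h
        simp at h
      simp [this, Sum.isLeft]
  rw [← e.map_rel_iff]
  have hra : ∀ z : Fin 1 ⊕ Fin (n-1), z.isRight = !z.isLeft := by
    rintro (z | z) <;> rfl
  show (completeBipartiteGraph _ _).Adj (e a) (e b) ↔ _
  constructor
  · rintro (⟨h1, h2⟩ | ⟨h1, h2⟩)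
    · rw [key] at h1
      rw [hra, key] at h2
      simp at h1 h2
      exact Or.inl ⟨h1, h2⟩
    · rw [hra, key] at h1
      rw [key] at h2
      simp at h1 h2
      exact Or.inr ⟨h2, h1⟩
  · rintro (⟨ha, hb⟩ | ⟨hb, ha⟩)
    · refine Or.inl ⟨?_, ?_⟩
      · rw [key]; simpa using ha
      · rw [hra, key]; simpa using hb
    · refine Or.inr ⟨?_, ?_⟩
      · rw [hra, key]; simpa using ha
      · rw [key]; simpa using hb

/-- The spectral radius of a real square matrix: the supremum of the absolute values of
its (real) eigenvalues. -/
noncomputable def specRad {V : Type*} [Fintype V] [DecidableEq V] (A : Matrix V V ℝ) : ℝ :=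
  sSup {r : ℝ | ∃ μ : ℝ, Module.End.HasEigenvalue (Matrix.toLin' A) μ ∧ r = |μ|}

/-- **Papendieck–Recht, equality case.** If `G` is a connected graph on `n ≥ 2` vertices with
principal eigenvector `x` (normalized so that `∑ x i ^ 2 = 1`), then the largest entry of `x`
equals `1 / √2` if and only if `G` is (isomorphic to) the star `K_{1,n-1}`. -/
theorem stmt1 {n : ℕ} (hn : 2 ≤ n) (G : SimpleGraph (Fin n)) [DecidableRel G.Adj]
    (hG : G.Connected) (x : Fin n → ℝ) (ρ : ℝ)
    (hρ : ρ = specRad (G.adjMatrix ℝ))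
    (hx_pos : ∀ i, 0 < x i)
    (hx_norm : ∑ i, x i ^ 2 = 1)
    (heig : G.adjMatrix ℝ *ᵥ x = ρ • x) :
    (⨆ i, x i) = 1 / Real.sqrt 2 ↔
      Nonempty (G ≃g completeBipartiteGraph (Fin 1) (Fin (n - 1))) := by
  constructor
  · intro hsup
    obtain ⟨c, hchar⟩ := forward_char hn G hG x ρ hx_pos hx_norm heig hsup
    exact iso_of_char hn G c hchar
  · rintro ⟨e⟩
    exact star_sup hn G x ρ hx_pos hx_norm heig _ (char_of_iso G e)
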